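/- Fix L > 0 and a sequence of constant forces F(N) > 0 with F(N)/N → 0 as N → ∞. For each N ≥ 2 let δ_1^{(N)}, ..., δ_N^{(N)} be the gaps of the unique equilibrium configuration on [-L, 0] for force F(N). Then N · max_{1 ≤ k ≤ N} | δ_k^{(N)} - L/N | → 0 as N → ∞; that is, the limiting particle density is strictly uniform on [-L, 0]. -/

import Mathlib

/-- An equilibrium (fixed-point) configuration of `N+1` charges
`-L ≤ x N < ... < x 1 < x 0 = 0` on `[-L, 0]` under constant external force `F`:
with gaps `δ k = x (k-1) - x k` and `f k = (δ k)⁻²`, the force balance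
`f (k+1) + F = f k` holds for `k = 1, ..., N-1`, and at the left end either
`x N = -L` with `f N ≥ F`, or `x N > -L` with `f N = F`. Such a configuration
exists and is unique. -/
def IsEquilibConst (N : ℕ) (L F : ℝ) (x : ℕ → ℝ) : Prop :=
  x 0 = 0 ∧ (∀ k < N, x (k + 1) < x k) ∧ -L ≤ x N ∧
  (∀ k, 1 ≤ k → k < N →
    ((x k - x (k + 1)) ^ 2)⁻¹ + F = ((x (k - 1) - x k) ^ 2)⁻¹) ∧
  ((x N = -L ∧ F ≤ ((x (N - 1) - x N) ^ 2)⁻¹) ∨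
   (-L < x N ∧ ((x (N - 1) - x N) ^ 2)⁻¹ = F))

open Finset

set_option maxHeartbeats 1000000 in
lemma equilib_key (L F : ℝ) (hL : 0 < L) (hF : 0 < F) (N : ℕ) (hN : 2 ≤ N)
    (x : ℕ → ℝ) (hx : IsEquilibConst N L F x) (hsub : F / N < 1 / L ^ 2) :
    ∀ k, 1 ≤ k → k ≤ N → (N : ℝ) * |(x (k - 1) - x k) - L / N| ≤ L ^ 3 * F / N := by
  obtain ⟨hx0, hlt, hxN, hrec, hend⟩ := hx
  have hNpos : (0:ℝ) < N := by positivity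
  set d : ℕ → ℝ := fun k => x (k - 1) - x k with hd_def
  have hdpos : ∀ k, 1 ≤ k → k ≤ N → 0 < d k := by
    intro k hk1 hkN
    have h := hlt (k-1) (by omega)
    rw [show k - 1 + 1 = k from by omega] at h
    simpa [hd_def] using sub_pos.mpr h
  set a : ℝ := ((x (N-1) - x N)^2)⁻¹ with ha_def
  have ha : 0 < a := by
    have h := hdpos N (by omega) le_rfl
    have h2 : x (N-1) - x N > 0 := h
    positivity
  -- force recursion in terms of d
  have hfj : ∀ j, j ≤ N - 1 → ((d (N - j))^2)⁻¹ = a + j * F := by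
    intro j
    induction j with
    | zero => intro _; simp [hd_def, ha_def]
    | succ j ih =>
      intro hj
      have hrec' := hrec (N - (j+1)) (by omega) (by omega)
      have e1 : N - (j+1) + 1 = N - j := by omega
      rw [e1] at hrec'
      have ihv := ih (by omega)
      have e2 : x (N - (j+1)) - x (N - j) = d (N - j) := by
        simp only [hd_def]
        congr 2 <;> omega
      have e3 : x (N - (j+1) - 1) - x (N - (j+1)) = d (N - (j+1)) := rfl
      rw [e2, e3] at hrec'
      rw [← hrec', ihv]
      push_cast
      ring
  have hfk : ∀ k, 1 ≤ k → k ≤ N → ((d k)^2)⁻¹ = a + ((N - k : ℕ)) * F := by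
    intro k hk1 hkN
    have h := hfj (N - k) (by omega)
    rwa [show N - (N - k) = k from by omega] at h
  set g : ℕ → ℝ := fun j => Real.sqrt (a + j * F) with hg_def
  have hgpos : ∀ j, 0 < g j := by
    intro j
    apply Real.sqrt_pos.mpr
    positivity
  have hgsq : ∀ j : ℕ, (g j)^2 = a + j * F := by
    intro j
    apply Real.sq_sqrt
    positivity
  have hdg : ∀ k, 1 ≤ k → k ≤ N → d k = (g (N - k))⁻¹ := by
    intro k hk1 hkN
    have hfv := hfk k hk1 hkN
    have h1 : (d k)^2 = ((g (N-k))⁻¹)^2 := by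
      rw [inv_pow, hgsq, ← hfv, inv_inv]
    have h2 := hdpos k hk1 hkN
    have h3 := hgpos (N - k)
    calc d k = Real.sqrt ((d k)^2) := (Real.sqrt_sq h2.le).symm
      _ = Real.sqrt (((g (N-k))⁻¹)^2) := by rw [h1]
      _ = (g (N-k))⁻¹ := Real.sqrt_sq (by positivity)
  have hgmono : ∀ i j : ℕ, i ≤ j → g i ≤ g j := by
    intro i j hij
    apply Real.sqrt_le_sqrt
    have : (i:ℝ) ≤ j := by exact_mod_cast hij
    nlinarith
  -- the sum of gaps
  have hsum : ∑ k ∈ Icc 1 N, d k = x 0 - x N := by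
    rw [show Icc 1 N = Ico 1 (N+1) from rfl, Finset.sum_Ico_eq_sum_range]
    rw [show N + 1 - 1 = N from rfl]
    have : ∀ i, d (1 + i) = x i - x (i+1) := by
      intro i; simp only [hd_def]; congr 2 <;> omega
    simp only [this]
    exact Finset.sum_range_sub' x N
  have hSle : ∑ k ∈ Icc 1 N, d k ≤ L := by rw [hsum, hx0]; linarith
  -- rule out the free case
  have hpinned : x N = -L ∧ F ≤ a := by
    rcases hend with h | ⟨hgt, heq⟩
    · exact h
    · exfalso
      have haF : a = F := heq
      have hdk_lb : ∀ k ∈ Icc 1 N, (Real.sqrt (N * F))⁻¹ ≤ d k := by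
        intro k hk
        rw [Finset.mem_Icc] at hk
        rw [hdg k hk.1 hk.2]
        apply inv_anti₀ (hgpos _)
        rw [hg_def]
        apply Real.sqrt_le_sqrt
        have hNk : ((N - k : ℕ) : ℝ) ≤ (N : ℝ) - 1 := by
          have : (N - k : ℕ) ≤ N - 1 := by omega
          calc ((N - k : ℕ):ℝ) ≤ ((N - 1 : ℕ):ℝ) := by exact_mod_cast this
            _ ≤ (N:ℝ) - 1 := by
              have : (1:ℕ) ≤ N := by omega
              push_cast [this]
              linarith
        rw [haF]
        nlinarith
      have hcard : (Icc 1 N).card = N := by simp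
      have hlow : (N : ℝ) * (Real.sqrt (N * F))⁻¹ ≤ ∑ k ∈ Icc 1 N, d k := by
        calc (N : ℝ) * (Real.sqrt (N * F))⁻¹
            = ∑ _k ∈ Icc 1 N, (Real.sqrt (N * F))⁻¹ := by
              rw [Finset.sum_const, hcard]; ring
          _ ≤ ∑ k ∈ Icc 1 N, d k := Finset.sum_le_sum hdk_lb
      have hs : (0:ℝ) < Real.sqrt (N * F) := Real.sqrt_pos.mpr (by positivity)
      have hs2 : (Real.sqrt (N * F))^2 = N * F := Real.sq_sqrt (by positivity)
      have hinv : Real.sqrt (N*F) * (Real.sqrt (N*F))⁻¹ = 1 := mul_inv_cancel₀ hs.ne'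
      have hNL : (N : ℝ) ≤ L * Real.sqrt (N * F) := by
        have h := hlow.trans hSle
        nlinarith [h, hs, hinv]
      have hFN : L^2 * F < N := by
        rw [div_lt_div_iff₀ hNpos (by positivity)] at hsub
        nlinarith
      nlinarith [hNL, hs2, hFN, hNpos]
  obtain ⟨hxNL, hFa⟩ := hpinned
  have hS : ∑ k ∈ Icc 1 N, d k = L := by rw [hsum, hx0, hxNL]; ring
  -- min and max gaps
  have hmin : ∀ k, 1 ≤ k → k ≤ N → d 1 ≤ d k := by
    intro k hk1 hkN
    rw [hdg 1 le_rfl (by omega), hdg k hk1 hkN]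
    exact inv_anti₀ (hgpos _) (hgmono _ _ (by omega))
  have hmax : ∀ k, 1 ≤ k → k ≤ N → d k ≤ d N := by
    intro k hk1 hkN
    rw [hdg N (by omega) le_rfl, hdg k hk1 hkN]
    simp only [Nat.sub_self]
    exact inv_anti₀ (hgpos _) (hgmono _ _ (by omega))
  have hcard : (Icc 1 N).card = N := by simp
  have hd1_le : d 1 ≤ L / N := by
    rw [div_eq_inv_mul, ← hS, le_inv_mul_iff₀ hNpos]
    calc (N:ℝ) * d 1 = ∑ _k ∈ Icc 1 N, d 1 := by rw [Finset.sum_const, hcard]; ring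
      _ ≤ ∑ k ∈ Icc 1 N, d k := Finset.sum_le_sum (fun k hk => by
          rw [Finset.mem_Icc] at hk; exact hmin k hk.1 hk.2)
  have hdN_ge : L / N ≤ d N := by
    rw [div_eq_inv_mul, ← hS, inv_mul_le_iff₀ hNpos]
    calc ∑ k ∈ Icc 1 N, d k
        ≤ ∑ _k ∈ Icc 1 N, d N := Finset.sum_le_sum (fun k hk => by
          rw [Finset.mem_Icc] at hk; exact hmax k hk.1 hk.2)
      _ = (N:ℝ) * d N := by rw [Finset.sum_const, hcard]; ring
  -- telescoping lower bound for the sum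
  have htel_term : ∀ k ∈ Icc 1 N, (2/F) * (g (N - k + 1) - g (N - k)) ≤ d k := by
    intro k hk
    rw [Finset.mem_Icc] at hk
    rw [hdg k hk.1 hk.2]
    set u := g (N - k) with hu
    set v := g (N - k + 1) with hv
    have hu0 : 0 < u := hgpos _
    have hv0 : 0 < v := hgpos _
    have hvu : v^2 - u^2 = F := by
      rw [hgsq, hgsq]
      push_cast
      ring
    have hstep : 2 * (v - u) * u ≤ F := by nlinarith [sq_nonneg (v - u)]
    rw [div_mul_eq_mul_div, div_le_iff₀ hF, inv_mul_eq_div, le_div_iff₀ hu0]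
    linarith
  have htel_sum : ∑ k ∈ Icc 1 N, ((2/F) * (g (N - k + 1) - g (N - k)))
      = (2/F) * (g N - g 0) := by
    rw [← Finset.mul_sum]
    congr 1
    rw [show Icc 1 N = Ico 1 (N+1) from rfl, Finset.sum_Ico_eq_sum_range]
    rw [show N + 1 - 1 = N from rfl]
    rw [← Finset.sum_range_reflect]
    rw [Finset.sum_congr rfl (fun i hi => ?_)]
    · exact Finset.sum_range_sub g N
    · rw [Finset.mem_range] at hi
      have e1 : N - (1 + (N - 1 - i)) + 1 = i + 1 := by omega
      have e2 : N - (1 + (N - 1 - i)) = i := by omega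
      rw [e1, e2]
  have hkey : g N ≤ g 0 + L * F / 2 := by
    have h1 : (2/F) * (g N - g 0) ≤ L := by
      rw [← htel_sum]
      exact (Finset.sum_le_sum htel_term).trans hSle
    rw [div_mul_eq_mul_div, div_le_iff₀ hF] at h1
    nlinarith
  have hb_lb : (N:ℝ) / L ≤ g (N - 1) := by
    have h1 : d 1 = (g (N-1))⁻¹ := hdg 1 le_rfl (by omega)
    have h2 := hgpos (N-1)
    rw [h1] at hd1_le
    have h3 : (L/(N:ℝ))⁻¹ ≤ g (N-1) := inv_le_of_inv_le₀ h2 hd1_le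
    rwa [inv_div] at h3
  -- lower bound on sqrt a = g 0
  have hLF : L * F / 2 < (N:ℝ) / (2 * L) := by
    rw [div_lt_div_iff₀ hNpos (by positivity)] at hsub
    rw [div_lt_div_iff₀ (by norm_num : (0:ℝ) < 2) (by positivity)]
    nlinarith
  have ha_lb : (N:ℝ) / (2 * L) ≤ g 0 := by
    have h1 : (N:ℝ) / L ≤ g N := hb_lb.trans (hgmono _ _ (by omega))
    have h2 : g N ≤ g 0 + L * F / 2 := hkey
    have h3 : (N:ℝ) / L = (N:ℝ)/(2*L) + (N:ℝ)/(2*L) := by field_simp; ring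
    linarith
  -- conclusion
  intro k hk1 hkN
  have hdk1 : d 1 ≤ d k := hmin k hk1 hkN
  have hdkN : d k ≤ d N := hmax k hk1 hkN
  have habs : |d k - L / N| ≤ d N - d 1 := by
    rw [abs_le]
    refine ⟨?_, ?_⟩
    · have h1 : d 1 - d N ≤ d k - L / (N:ℝ) := by
        have := sub_le_sub hdk1 hdN_ge
        linarith [sub_le_sub hdk1 hdN_ge]
      linarith [h1]
    · linarith [sub_le_sub hdkN hd1_le]
  have hdN_eq : d N = (g 0)⁻¹ := by
    have := hdg N (by omega) le_rfl
    rwa [Nat.sub_self] at this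
  have hd1_eq : d 1 = (g (N-1))⁻¹ := hdg 1 le_rfl (by omega)
  have hg0 := hgpos 0
  have hgN1 := hgpos (N-1)
  have hgap : g (N-1) - g 0 ≤ L * F / 2 := by
    have := hgmono (N-1) N (by omega)
    linarith [hkey]
  have hinv0 : (g 0)⁻¹ ≤ 2 * L / N := by
    have h2 : (0:ℝ) < (N:ℝ)/(2*L) := by positivity
    have h3 := inv_anti₀ h2 ha_lb
    rwa [inv_div] at h3
  have hinv1 : (g (N-1))⁻¹ ≤ L / N := by rw [← hd1_eq]; exact hd1_le
  have hdiff : d N - d 1 ≤ L^3 * F / N^2 := by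
    rw [hdN_eq, hd1_eq]
    have e : (g 0)⁻¹ - (g (N-1))⁻¹ = (g (N-1) - g 0) * ((g 0)⁻¹ * (g (N-1))⁻¹) := by
      field_simp
    rw [e]
    have h0 : (0:ℝ) ≤ g (N-1) - g 0 := by linarith [hgmono 0 (N-1) (by omega)]
    calc (g (N-1) - g 0) * ((g 0)⁻¹ * (g (N-1))⁻¹)
        ≤ (L*F/2) * ((2*L/N) * (L/N)) := by
          apply mul_le_mul hgap ?_ (by positivity) (by positivity)
          exact mul_le_mul hinv0 hinv1 (by positivity) (by positivity)
      _ = L^3 * F / N^2 := by field_simp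
  show (N:ℝ) * |d k - L / N| ≤ L ^ 3 * F / N
  calc (N:ℝ) * |d k - L/N| ≤ (N:ℝ) * (d N - d 1) :=
        mul_le_mul_of_nonneg_left habs hNpos.le
    _ ≤ (N:ℝ) * (L^3 * F / N^2) := mul_le_mul_of_nonneg_left hdiff hNpos.le
    _ = L^3 * F / N := by field_simp

/-- If the constant forces satisfy `F N / N → 0`, then the
gaps of the equilibrium configurations are asymptotically uniform:
`N · max_{1 ≤ k ≤ N} |δ k - L/N| → 0` as `N → ∞`. -/
theorem uniform_density_subcritical
    (L : ℝ) (hL : 0 < L) (F : ℕ → ℝ) (hFpos : ∀ N, 0 < F N)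
    (hFo : Filter.Tendsto (fun N : ℕ => F N / (N : ℝ)) Filter.atTop (nhds 0))
    (x : ℕ → ℕ → ℝ) (hx : ∀ N, 2 ≤ N → IsEquilibConst N L (F N) (x N)) :
    ∀ ε > (0 : ℝ), ∃ N₀ : ℕ, ∀ N, N₀ ≤ N → 2 ≤ N → ∀ k, 1 ≤ k → k ≤ N →
      (N : ℝ) * |(x N (k - 1) - x N k) - L / N| < ε := by
  intro ε hε
  have hc : (0:ℝ) < min (1 / L^2) (ε / (L^3 + 1)) :=
    lt_min (by positivity) (by positivity)
  have hev : ∀ᶠ N : ℕ in Filter.atTop,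
      F N / N < min (1 / L^2) (ε / (L^3 + 1)) :=
    hFo.eventually_lt_const hc
  obtain ⟨N₀, hN₀⟩ := Filter.eventually_atTop.mp hev
  refine ⟨N₀, fun N hN hN2 k hk1 hkN => ?_⟩
  have hsub : F N / N < 1 / L^2 := (hN₀ N hN).trans_le (min_le_left _ _)
  have hkey := equilib_key L (F N) hL (hFpos N) N hN2 (x N) (hx N hN2) hsub k hk1 hkN
  have hNp : (0:ℝ) < N := by
    have : 0 < N := by omega
    exact_mod_cast this
  have h3 : F N / N < ε / (L^3 + 1) := (hN₀ N hN).trans_le (min_le_right _ _)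
  have h2 : L^3 * F N / N < ε := by
    have hfrac : L^3 / (L^3+1) < 1 := (div_lt_one (by positivity)).mpr (by linarith)
    calc L^3 * F N / N = L^3 * (F N / N) := by ring
      _ < L^3 * (ε / (L^3+1)) := by
          exact mul_lt_mul_of_pos_left h3 (by positivity)
      _ = ε * (L^3 / (L^3+1)) := by ring
      _ < ε * 1 := mul_lt_mul_of_pos_left hfrac hε
      _ = ε := mul_one ε
  exact lt_of_le_of_lt hkey h2
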